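/- Let Γ be an (n,k,t)-graph that is a disjoint union of cliques and which is not an (n, k-1, t)-graph. With A the union of components with fewer than t vertices and B the union of components with at least t vertices, we have k - 1 = (t-1)·c(B) + |V(A)|. -/

import Mathlib

open SimpleGraph

/-- `G` is a graph in which every set of `k` vertices contains a clique on `t` vertices. -/
def CliqueInEveryK {V : Type*} [DecidableEq V] (G : SimpleGraph V) (k t : ℕ) : Prop :=
  ∀ s : Finset V, s.card = k → ∃ c ⊆ s, G.IsNClique t c

/-- Every connected component of `G` is a complete graph. -/
def IsDisjointUnionOfCliques {V : Type*} (G : SimpleGraph V) : Prop :=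
  ∀ u v : V, G.Reachable u v → u ≠ v → G.Adj u v

/-- The number of components of `Γ` having at least `t` vertices (the components of `B`). -/
noncomputable def numBigComponents {V : Type*} (Γ : SimpleGraph V) (t : ℕ) : ℕ :=
  Nat.card {C : Γ.ConnectedComponent // t ≤ Nat.card C.supp}

/-- The number of vertices lying in components with fewer than `t` vertices (`|V(A)|`). -/
noncomputable def numSmallVertices {V : Type*} (Γ : SimpleGraph V) (t : ℕ) : ℕ :=
  Nat.card {v : V // Nat.card (Γ.connectedComponentMk v).supp < t}

/-- If `Γ` is an `(n,k,t)`-graph that is a disjoint union of cliques and is not an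
`(n,k-1,t)`-graph, then `k - 1 = (t-1)·c(B) + |V(A)|`. -/
theorem stmt_7 {V : Type*} [Fintype V] [DecidableEq V] {n k t : ℕ}
    (hn : Fintype.card V = n) (hkn : k ≤ n) (htk : t ≤ k) (ht : 1 ≤ t)
    (Γ : SimpleGraph V) (hΓkt : CliqueInEveryK Γ k t)
    (hnot : ¬ CliqueInEveryK Γ (k - 1) t) (hΓ : IsDisjointUnionOfCliques Γ) :
    (t - 1) * numBigComponents Γ t + numSmallVertices Γ t = k - 1 := by
  classical
  haveI : Fintype Γ.ConnectedComponent := Fintype.ofFinite _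
  have suppcard : ∀ C : Γ.ConnectedComponent, Nat.card C.supp = C.supp.toFinset.card := by
    intro C
    rw [Nat.card_coe_set_eq, Set.ncard_eq_toFinset_card']
  set m := ∑ C : Γ.ConnectedComponent, min C.supp.toFinset.card (t - 1) with hm
  -- every t-clique lies in one connected component
  have clique_comp : ∀ c : Finset V, Γ.IsNClique t c →
      ∃ C, ∀ v ∈ c, Γ.connectedComponentMk v = C := by
    intro c hc
    obtain ⟨x, hx⟩ := Finset.card_pos.mp (by rw [hc.card_eq]; exact ht)
    refine ⟨Γ.connectedComponentMk x, fun v hv => ?_⟩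
    rcases eq_or_ne v x with rfl | hne
    · rfl
    · exact (ConnectedComponent.eq).mpr (hc.1 hv hx hne).reachable
  -- Lemma A: any t-clique-free set has at most m elements
  have lemA : ∀ s : Finset V, (∀ c ⊆ s, ¬ Γ.IsNClique t c) → s.card ≤ m := by
    intro s hs
    rw [Finset.card_eq_sum_card_fiberwise
      (f := Γ.connectedComponentMk) (t := Finset.univ) (fun x _ => Finset.mem_univ _)]
    apply Finset.sum_le_sum
    intro C _
    rw [le_min_iff]
    constructor
    · apply Finset.card_le_card
      intro v hv
      rw [Set.mem_toFinset, ConnectedComponent.mem_supp_iff]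
      exact (Finset.mem_filter.mp hv).2
    · by_contra h
      push_neg at h
      have h' : t ≤ (s.filter (fun v => Γ.connectedComponentMk v = C)).card := by omega
      obtain ⟨c, hcsub, hcc⟩ := Finset.exists_subset_card_eq h'
      apply hs c (hcsub.trans (Finset.filter_subset _ _))
      constructor
      · intro u hu v hv huv
        have hu' := (Finset.mem_filter.mp (hcsub hu)).2
        have hv' := (Finset.mem_filter.mp (hcsub hv)).2
        exact hΓ u v ((ConnectedComponent.eq).mp (hu'.trans hv'.symm)) huv
      · exact hcc
  -- Lemma B: there is a t-clique-free set of exactly m elements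
  have lemB : ∃ s : Finset V, s.card = m ∧ (∀ c ⊆ s, ¬ Γ.IsNClique t c) := by
    have hpick : ∀ C : Γ.ConnectedComponent,
        ∃ p ⊆ C.supp.toFinset, p.card = min C.supp.toFinset.card (t - 1) :=
      fun C => Finset.exists_subset_card_eq (min_le_left _ _)
    choose p hpsub hpcard using hpick
    have hmemp : ∀ (C : Γ.ConnectedComponent) (v : V), v ∈ p C → Γ.connectedComponentMk v = C := by
      intro C v hv
      have := hpsub C hv
      rw [Set.mem_toFinset, ConnectedComponent.mem_supp_iff] at this
      exact this
    refine ⟨Finset.univ.biUnion p, ?_, ?_⟩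
    · rw [Finset.card_biUnion, hm]
      · exact Finset.sum_congr rfl (fun C _ => hpcard C)
      · intro C1 _ C2 _ hne
        rw [Function.onFun, Finset.disjoint_left]
        intro v hv1 hv2
        exact hne ((hmemp C1 v hv1).symm.trans (hmemp C2 v hv2))
    · intro c hc hclique
      obtain ⟨C, hC⟩ := clique_comp c hclique
      have hsub : c ⊆ p C := by
        intro v hv
        obtain ⟨C', _, hv'⟩ := Finset.mem_biUnion.mp (hc hv)
        have : C' = C := ((hmemp C' v hv').symm.trans (hC v hv))
        rwa [← this]
      have h1 := Finset.card_le_card hsub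
      rw [hclique.card_eq, hpcard] at h1
      have h2 := min_le_right C.supp.toFinset.card (t - 1)
      omega
  -- k - 1 ≤ m
  have hge : k - 1 ≤ m := by
    rw [CliqueInEveryK] at hnot
    push_neg at hnot
    obtain ⟨s, hscard, hs⟩ := hnot
    exact hscard ▸ lemA s hs
  -- m ≤ k - 1
  have hle : m ≤ k - 1 := by
    by_contra h
    push_neg at h
    obtain ⟨s, hscard, hs⟩ := lemB
    obtain ⟨s', hs'sub, hs'card⟩ := Finset.exists_subset_card_eq (s := s) (n := k) (by omega)
    obtain ⟨c, hcsub, hc⟩ := hΓkt s' hs'card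
    exact hs c (hcsub.trans hs'sub) hc
  -- the counting identity
  have hbig : numBigComponents Γ t =
      (Finset.univ.filter (fun C : Γ.ConnectedComponent => t ≤ Nat.card C.supp)).card := by
    rw [numBigComponents, Nat.card_eq_fintype_card, Fintype.card_subtype]
  have hsmall : numSmallVertices Γ t =
      (Finset.univ.filter (fun v : V => Nat.card (Γ.connectedComponentMk v).supp < t)).card := by
    rw [numSmallVertices, Nat.card_eq_fintype_card, Fintype.card_subtype]
  have key : (t - 1) * numBigComponents Γ t + numSmallVertices Γ t = m := by
    rw [hbig, hsmall, hm,
      ← Finset.sum_filter_add_sum_filter_not Finset.univ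
        (fun C : Γ.ConnectedComponent => t ≤ Nat.card C.supp)
        (fun C => min C.supp.toFinset.card (t - 1))]
    congr 1
    · have hmin : ∀ C ∈ Finset.univ.filter
          (fun C : Γ.ConnectedComponent => t ≤ Nat.card C.supp),
          min C.supp.toFinset.card (t - 1) = t - 1 := by
        intro C hC
        have h1 := (Finset.mem_filter.mp hC).2
        rw [suppcard C] at h1
        exact min_eq_right (by omega)
      rw [Finset.sum_congr rfl hmin, Finset.sum_const, smul_eq_mul]
      exact mul_comm _ _
    · have hmem : ∀ v ∈ Finset.univ.filter
          (fun v : V => Nat.card (Γ.connectedComponentMk v).supp < t),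
          Γ.connectedComponentMk v ∈ Finset.univ.filter
            (fun C : Γ.ConnectedComponent => ¬ t ≤ Nat.card C.supp) := by
        intro v hv
        rw [Finset.mem_filter] at hv ⊢
        exact ⟨Finset.mem_univ _, by omega⟩
      rw [Finset.card_eq_sum_card_fiberwise hmem]
      apply Finset.sum_congr rfl
      intro C hC
      have hCs : C.supp.toFinset.card ≤ t - 1 := by
        have h1 := (Finset.mem_filter.mp hC).2
        rw [suppcard C] at h1
        omega
      rw [min_eq_left hCs]
      congr 1
      ext v
      simp only [Finset.mem_filter, Finset.mem_univ, true_and, Set.mem_toFinset,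
        ConnectedComponent.mem_supp_iff]
      constructor
      · rintro ⟨-, h⟩; exact h
      · intro h
        refine ⟨?_, h⟩
        rw [h, suppcard C]
        omega
  omega
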